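/- Monotone one-step bound for the interior update: for all real numbers a, b, c one has |b − λ·(F(b,c) − F(a,b))| ≤ max(|a|, |b|, |c|). -/

import Mathlib

/-- Monotone one-step bound for the interior update of the scheme:
given a split numerical flux `F(u,v) = F₁(u) + F₂(v)` with `F₁, F₂ ∈ C¹`,
`F₁' ≥ 0`, `F₂' ≤ 0` and the CFL condition `λ (F₁' - F₂') ≤ 1`, one has
`|b - λ (F(b,c) - F(a,b))| ≤ max (|a|, |b|, |c|)`. -/
theorem stmt_0 (lam : ℝ) (hlam : 0 < lam) (F₁ F₂ : ℝ → ℝ)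
    (hF₁ : ContDiff ℝ 1 F₁) (hF₂ : ContDiff ℝ 1 F₂)
    (hmono₁ : ∀ w, 0 ≤ deriv F₁ w) (hmono₂ : ∀ w, deriv F₂ w ≤ 0)
    (hCFL : ∀ w, lam * (deriv F₁ w - deriv F₂ w) ≤ 1)
    (a b c : ℝ) :
    |b - lam * ((F₁ b + F₂ c) - (F₁ a + F₂ b))| ≤ max |a| (max |b| |c|) := by
  have hd₁ : Differentiable ℝ F₁ := hF₁.differentiable one_ne_zero
  have hd₂ : Differentiable ℝ F₂ := hF₂.differentiable one_ne_zero
  have hF₁mono : Monotone F₁ := monotone_of_deriv_nonneg hd₁ hmono₁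
  have hF₂anti : Antitone F₂ := antitone_of_deriv_nonpos hd₂ hmono₂
  -- the diagonal part g(w) = w - λ F₁ w + λ F₂ w is monotone by CFL
  set g : ℝ → ℝ := fun w => w - lam * F₁ w + lam * F₂ w with hg
  have hgderiv : ∀ w, deriv g w = 1 - lam * deriv F₁ w + lam * deriv F₂ w := by
    intro w
    have h : HasDerivAt g (1 - lam * deriv F₁ w + lam * deriv F₂ w) w :=
      ((hasDerivAt_id w).sub (((hd₁ w).hasDerivAt).const_mul lam)).add
        (((hd₂ w).hasDerivAt).const_mul lam)
    exact h.deriv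
  have hgdiff : Differentiable ℝ g :=
    ((differentiable_id.sub (hd₁.const_mul lam)).add (hd₂.const_mul lam))
  have hgmono : Monotone g := by
    apply monotone_of_deriv_nonneg hgdiff
    intro w
    rw [hgderiv w]
    have := hCFL w
    linarith
  -- rewrite the update as g b + λ F₁ a - λ F₂ c
  have key : b - lam * ((F₁ b + F₂ c) - (F₁ a + F₂ b)) = g b + lam * F₁ a - lam * F₂ c := by
    simp only [hg]; ring
  rw [key]
  set M := max a (max b c) with hM
  set m := min a (min b c) with hm
  have hdiag : ∀ w : ℝ, g w + lam * F₁ w - lam * F₂ w = w := by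
    intro w; simp only [hg]; ring
  -- upper bound
  have hub : g b + lam * F₁ a - lam * F₂ c ≤ M := by
    have h1 : g b ≤ g M := hgmono (le_trans (le_max_left _ _) (le_max_right _ _))
    have h2 : F₁ a ≤ F₁ M := hF₁mono (le_max_left _ _)
    have h3 : F₂ M ≤ F₂ c := hF₂anti (le_trans (le_max_right _ _) (le_max_right _ _))
    have := hdiag M
    nlinarith
  -- lower bound
  have hlb : m ≤ g b + lam * F₁ a - lam * F₂ c := by
    have h1 : g m ≤ g b := hgmono (le_trans (min_le_right _ _) (min_le_left _ _))
    have h2 : F₁ m ≤ F₁ a := hF₁mono (min_le_left _ _)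
    have h3 : F₂ c ≤ F₂ m := hF₂anti (le_trans (min_le_right _ _) (min_le_right _ _))
    have := hdiag m
    nlinarith
  rw [abs_le]
  constructor
  · refine le_trans ?_ hlb
    have : -(max |a| (max |b| |c|)) ≤ m := by
      apply le_min
      · linarith [neg_abs_le a, le_max_left |a| (max |b| |c|)]
      apply le_min
      · linarith [neg_abs_le b, le_trans (le_max_left |b| |c|) (le_max_right |a| (max |b| |c|))]
      · linarith [neg_abs_le c, le_trans (le_max_right |b| |c|) (le_max_right |a| (max |b| |c|))]
    exact this
  · refine le_trans hub ?_
    apply max_le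
    · exact le_trans (le_abs_self a) (le_max_left _ _)
    apply max_le
    · exact le_trans (le_abs_self b) (le_trans (le_max_left _ _) (le_max_right _ _))
    · exact le_trans (le_abs_self c) (le_trans (le_max_right _ _) (le_max_right _ _))
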